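/- If p = q − 1 (p, q > 0) and x_0 ≠ −Φ₊, then the partial products of the solution of x_{n+1} = q/(p + x_n) satisfy ∏_{i=0}^n x_i → x_0·√(p²+4q)/(Φ₊ + x_0) as n → ∞, where Φ₊ = (p + √(p²+4q))/2. -/

import Mathlib

theorem stmt_12 (p q : ℝ) (hp : 0 < p) (hq : 0 < q) (hpq : p = q - 1) (x : ℕ → ℝ)
    (hrec : ∀ n : ℕ, x (n + 1) = q / (p + x n))
    (hne : ∀ n : ℕ, p + x n ≠ 0)
    (h0 : x 0 ≠ -((p + Real.sqrt (p ^ 2 + 4 * q)) / 2)) :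
    Filter.Tendsto (fun n : ℕ => ∏ i ∈ Finset.range (n + 1), x i)
      Filter.atTop
      (nhds (x 0 * Real.sqrt (p ^ 2 + 4 * q) /
        ((p + Real.sqrt (p ^ 2 + 4 * q)) / 2 + x 0))) := by
  subst hpq
  have hq1 : (1:ℝ) < q := by linarith
  have hq0 : (q:ℝ) ≠ 0 := by linarith
  have hq1' : q + 1 ≠ 0 := by linarith
  have hs : Real.sqrt ((q-1) ^ 2 + 4 * q) = q + 1 := by
    rw [show (q-1) ^ 2 + 4 * q = (q+1)^2 by ring]
    exact Real.sqrt_sq (by linarith)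
  rw [hs] at h0 ⊢
  have h0' : x 0 + q ≠ 0 := by
    intro h; apply h0; linarith
  rw [show (q - 1 + (q + 1)) / 2 + x 0 = x 0 + q by ring]
  set d : ℕ → ℝ := fun n => ((q^n - (-1:ℝ)^n) * x 0 + (q^(n+1) + (-1:ℝ)^n)) / (q+1) with hd
  have key : ∀ n, d n ≠ 0 ∧ (q - 1 + x n) * d n = d (n+1) ∧
      (∏ i ∈ Finset.range (n+1), x i) * d n = q^n * x 0 := by
    intro n
    induction n with
    | zero =>
      have hd0 : d 0 = 1 := by
        simp only [hd, pow_zero, pow_one]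
        field_simp
        ring
      refine ⟨by rw [hd0]; norm_num, ?_, ?_⟩
      · rw [hd0]
        simp only [hd]
        field_simp
        ring
      · rw [hd0]; simp
    | succ n ih =>
      obtain ⟨h1, h2, h3⟩ := ih
      have hdn1 : d (n+1) = (q - 1 + x n) * d n := h2.symm
      have hne1 : d (n+1) ≠ 0 := by rw [hdn1]; exact mul_ne_zero (hne n) h1
      refine ⟨hne1, ?_, ?_⟩
      · rw [hrec n]
        have e1 : (q - 1 + q / (q - 1 + x n)) * d (n+1)
            = (q-1) * d (n+1) + q * d n := by
          rw [hdn1]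
          field_simp [hne n]
        rw [e1]
        simp only [hd]
        field_simp
        ring
      · rw [Finset.prod_range_succ, hrec n, hdn1]
        have e1 : q / (q - 1 + x n) * ((q - 1 + x n) * d n) = q * d n := by
          field_simp [hne n]
        rw [mul_assoc, e1, ← mul_assoc, mul_comm _ q, mul_assoc, h3]
        ring
  set E : ℕ → ℝ := fun n => x 0 + q + (1 - x 0) * (-1/q)^n with hE
  have hdE : ∀ n, d n = q^n * E n / (q+1) := by
    intro n
    simp only [hd, hE]
    rw [div_pow]
    field_simp
    ring
  have hEne : ∀ n, E n ≠ 0 := by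
    intro n
    have hdn := (key n).1
    rw [hdE n] at hdn
    intro h
    apply hdn
    rw [h]
    simp
  have hprod : ∀ n, (∏ i ∈ Finset.range (n+1), x i) = x 0 * (q+1) / E n := by
    intro n
    have hqn : q^n ≠ 0 := pow_ne_zero n hq0
    have h3 := (key n).2.2
    rw [hdE n] at h3
    have h4 : ((∏ i ∈ Finset.range (n+1), x i) * E n) * q^n
        = (x 0 * (q+1)) * q^n := by
      field_simp at h3
      linear_combination q^n * h3
    have h5 := mul_right_cancel₀ hqn h4
    rw [eq_div_iff (hEne n)]
    exact h5
  have hr : Filter.Tendsto (fun n : ℕ => ((-1)/q)^n) Filter.atTop (nhds 0) := by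
    apply tendsto_pow_atTop_nhds_zero_of_abs_lt_one
    rw [abs_div, abs_neg, abs_one, abs_of_pos hq, div_lt_one hq]
    exact hq1
  have hEt : Filter.Tendsto E Filter.atTop (nhds (x 0 + q)) := by
    have h := (hr.const_mul (1 - x 0)).const_add (x 0 + q)
    simpa [hE] using h
  have hfin := Filter.Tendsto.div (tendsto_const_nhds (x := x 0 * (q+1))) hEt h0'
  exact Filter.Tendsto.congr (fun n => (hprod n).symm) hfin
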